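/- (Two-margin closed form, even case.) With two alternating partitions A,B (A^{(2m+1)} = A, A^{(2m)} = B) and the recursion G^{(N)}(f) = G^{(N-1)}(f) − Σ_j E(f|C_j^{(N)})G^{(N-1)}(C_j^{(N)}) started from a linear process G, one has for all m ≥ 0: G^{(2m)}(f) = G(f) − (S_{1,even}^{(m−1)}(f))ᵗ·G[A] − (S_{2,even}^{(m−2)}(f))ᵗ·G[B], where S_{1,even}^{(N)}(f) = Σ_{k=0}^{N}(P_{B|A}P_{A|B})^k (E[f|A] − P_{B|A}E[f|B]), S_{2,odd}^{(N)}(f) = Σ_{k=0}^{N}(P_{A|B}P_{B|A})^k (E[f|B] − P_{A|B}E[f|A]), S_{2,even}^{(N)}(f) = S_{2,odd}^{(N)}(f) + (P_{A|B}P_{B|A})^{N+1} E[f|B], with the convention that sums with negative upper index are zero and matrices with negative power are the zero matrix. -/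

import Mathlib

open MeasureTheory

noncomputable section

variable {𝒳 : Type*} [MeasurableSpace 𝒳]

/-- The conditional probability matrix `P_{B|A}`, `(P_{B|A})_{ij} = P(Bj|Ai)`. -/
def condMat (P : Measure 𝒳) {m₁ m₂ : ℕ} (A : Fin m₁ → Set 𝒳) (B : Fin m₂ → Set 𝒳) :
    Matrix (Fin m₁) (Fin m₂) ℝ :=
  Matrix.of fun i j => (P (B j ∩ A i)).toReal / (P (A i)).toReal

/-- The conditional expectation vector `E[f|A]`. -/
def condExpVec (P : Measure 𝒳) {m₁ : ℕ} (A : Fin m₁ → Set 𝒳) (f : 𝒳 → ℝ) :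
    Fin m₁ → ℝ :=
  fun i => (∫ x in A i, f x ∂P) / (P (A i)).toReal

/-- Matrix power with integer exponent, with the convention that a matrix raised to a
negative power is the zero matrix. -/
def mpowz {n : ℕ} (M : Matrix (Fin n) (Fin n) ℝ) (z : ℤ) : Matrix (Fin n) (Fin n) ℝ :=
  if z < 0 then 0 else M ^ z.toNat

/-- `S_{1,even}^{(N)}(f) = Σ_{k=0}^{N} (P_{B|A}P_{A|B})^k (E[f|A] − P_{B|A}E[f|B])`; a sum
with negative upper index is null. -/
def S1even (P : Measure 𝒳) {m₁ m₂ : ℕ} (A : Fin m₁ → Set 𝒳) (B : Fin m₂ → Set 𝒳)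
    (f : 𝒳 → ℝ) (N : ℤ) : Fin m₁ → ℝ :=
  ∑ k ∈ Finset.range (N + 1).toNat,
    ((condMat P A B * condMat P B A) ^ k).mulVec
      (condExpVec P A f - (condMat P A B).mulVec (condExpVec P B f))

/-- `S_{2,odd}^{(N)}(f) = Σ_{k=0}^{N} (P_{A|B}P_{B|A})^k (E[f|B] − P_{A|B}E[f|A])`. -/
def S2odd (P : Measure 𝒳) {m₁ m₂ : ℕ} (A : Fin m₁ → Set 𝒳) (B : Fin m₂ → Set 𝒳)
    (f : 𝒳 → ℝ) (N : ℤ) : Fin m₂ → ℝ :=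
  ∑ k ∈ Finset.range (N + 1).toNat,
    ((condMat P B A * condMat P A B) ^ k).mulVec
      (condExpVec P B f - (condMat P B A).mulVec (condExpVec P A f))

/-- `S_{2,even}^{(N)}(f) = S_{2,odd}^{(N)}(f) + (P_{A|B}P_{B|A})^{N+1} E[f|B]`. -/
def S2even (P : Measure 𝒳) {m₁ m₂ : ℕ} (A : Fin m₁ → Set 𝒳) (B : Fin m₂ → Set 𝒳)
    (f : 𝒳 → ℝ) (N : ℤ) : Fin m₂ → ℝ :=
  S2odd P A B f N + (mpowz (condMat P B A * condMat P A B) (N + 1)).mulVec (condExpVec P B f)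

/-- The raking recursion with the two alternating partitions `A^{(2m+1)} = A`,
`A^{(2m)} = B`: step `N+1` uses `A` if `N+1` is odd and `B` if `N+1` is even. -/
def rake2 (P : Measure 𝒳) {m₁ m₂ : ℕ} (A : Fin m₁ → Set 𝒳) (B : Fin m₂ → Set 𝒳)
    (G : (𝒳 → ℝ) → ℝ) : ℕ → (𝒳 → ℝ) → ℝ
  | 0 => G
  | N + 1 => fun f =>
      rake2 P A B G N f -
        if (N + 1) % 2 = 1 then
          ∑ j : Fin m₁, ((∫ x in A j, f x ∂P) / (P (A j)).toReal) *
            rake2 P A B G N ((A j).indicator (1 : 𝒳 → ℝ))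
        else
          ∑ j : Fin m₂, ((∫ x in B j, f x ∂P) / (P (B j)).toReal) *
            rake2 P A B G N ((B j).indicator (1 : 𝒳 → ℝ))

lemma setIntegral_indicator_one' (P : Measure 𝒳) {s : Set 𝒳} (hs : MeasurableSet s)
    (t : Set 𝒳) : ∫ x in t, s.indicator (1 : 𝒳 → ℝ) x ∂P = (P (s ∩ t)).toReal := by
  rw [integral_indicator_one hs, measureReal_def, Measure.restrict_apply hs]

lemma condExpVec_indicator_same' (P : Measure 𝒳) [IsFiniteMeasure P] {n : ℕ}
    (C : Fin n → Set 𝒳) (hmeas : ∀ i, MeasurableSet (C i))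
    (hdisj : ∀ i j, i ≠ j → Disjoint (C i) (C j)) (hpos : ∀ i, 0 < P (C i)) (j : Fin n) :
    condExpVec P C ((C j).indicator (1 : 𝒳 → ℝ)) = Pi.single j 1 := by
  funext i
  rw [condExpVec]
  rw [setIntegral_indicator_one' P (hmeas j)]
  by_cases h : i = j
  · subst h
    rw [Set.inter_self, Pi.single_eq_same]
    exact div_self (ENNReal.toReal_pos (hpos i).ne' (measure_ne_top P _)).ne'
  · have hd : C j ∩ C i = ∅ := (hdisj j i fun hh => h hh.symm).inter_eq
    rw [hd]
    simp [Pi.single_eq_of_ne h]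

lemma condExpVec_indicator_other' (P : Measure 𝒳) {n n' : ℕ}
    (C : Fin n → Set 𝒳) (D : Fin n' → Set 𝒳) (hD : ∀ j, MeasurableSet (D j)) (j : Fin n') :
    condExpVec P C ((D j).indicator (1 : 𝒳 → ℝ)) = fun i => condMat P C D i j := by
  funext i
  rw [condExpVec, setIntegral_indicator_one' P (hD j)]
  rfl

lemma sum_mulVec' {p q : ℕ} (s : Finset ℕ) (F : ℕ → Matrix (Fin p) (Fin q) ℝ)
    (v : Fin q → ℝ) : (∑ k ∈ s, F k).mulVec v = ∑ k ∈ s, (F k).mulVec v := by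
  funext i
  simp only [Matrix.mulVec, dotProduct, Matrix.sum_apply, Finset.sum_apply,
    Finset.sum_mul]
  exact Finset.sum_comm

lemma helper_substA' {p m₁ m₂ : ℕ} (R : Matrix (Fin m₂) (Fin m₁) ℝ)
    (X : Matrix (Fin p) (Fin m₁) ℝ) (Y : Matrix (Fin p) (Fin m₂) ℝ)
    (c : Fin m₁ → ℝ) (V : Fin p → ℝ) :
    ∑ j, c j * (∑ i, (X.mulVec (Pi.single j 1) + Y.mulVec fun i' => R i' j) i * V i)
      = ∑ i, (X.mulVec c + (Y * R).mulVec c) i * V i := by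
  simp only [Finset.mul_sum]
  rw [Finset.sum_comm]
  refine Finset.sum_congr rfl fun i _ => ?_
  simp only [Pi.add_apply, Matrix.mulVec_single_one, Matrix.col_apply, mul_one, Matrix.mulVec, dotProduct,
    Matrix.mul_apply]
  rw [← Finset.sum_add_distrib, Finset.sum_mul]
  exact Finset.sum_congr rfl fun j _ => by ring

lemma helper_substB' {p m₁ m₂ : ℕ} (Q : Matrix (Fin m₁) (Fin m₂) ℝ)
    (X : Matrix (Fin p) (Fin m₁) ℝ) (Y : Matrix (Fin p) (Fin m₂) ℝ)
    (c : Fin m₂ → ℝ) (V : Fin p → ℝ) :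
    ∑ j, c j * (∑ i, (X.mulVec (fun i' => Q i' j) + Y.mulVec (Pi.single j 1)) i * V i)
      = ∑ i, ((X * Q).mulVec c + Y.mulVec c) i * V i := by
  simp only [Finset.mul_sum]
  rw [Finset.sum_comm]
  refine Finset.sum_congr rfl fun i _ => ?_
  simp only [Pi.add_apply, Matrix.mulVec_single_one, Matrix.col_apply, mul_one, Matrix.mulVec, dotProduct,
    Matrix.mul_apply]
  rw [← Finset.sum_add_distrib, Finset.sum_mul]
  exact Finset.sum_congr rfl fun j _ => by ring

lemma rake2_stepA (P : Measure 𝒳) [IsProbabilityMeasure P] {m₁ m₂ : ℕ}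
    (A : Fin m₁ → Set 𝒳) (B : Fin m₂ → Set 𝒳)
    (hAmeas : ∀ i, MeasurableSet (A i))
    (hAdisj : ∀ i j, i ≠ j → Disjoint (A i) (A j))
    (hA : ∀ i, 0 < P (A i))
    (G : (𝒳 → ℝ) → ℝ) (n : ℕ) (hn : (n + 1) % 2 = 1)
    (XA : Matrix (Fin m₁) (Fin m₁) ℝ) (XB : Matrix (Fin m₁) (Fin m₂) ℝ)
    (YA : Matrix (Fin m₂) (Fin m₁) ℝ) (YB : Matrix (Fin m₂) (Fin m₂) ℝ)
    (H : ∀ g, rake2 P A B G n g = G g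
        - ∑ i, (XA.mulVec (condExpVec P A g) + XB.mulVec (condExpVec P B g)) i
            * G ((A i).indicator (1 : 𝒳 → ℝ))
        - ∑ j, (YA.mulVec (condExpVec P A g) + YB.mulVec (condExpVec P B g)) j
            * G ((B j).indicator (1 : 𝒳 → ℝ))) :
    ∀ g, rake2 P A B G (n + 1) g = G g
        - ∑ i, (((1 : Matrix (Fin m₁) (Fin m₁) ℝ) - XB * condMat P B A).mulVec (condExpVec P A g)
            + XB.mulVec (condExpVec P B g)) i * G ((A i).indicator (1 : 𝒳 → ℝ))
        - ∑ j, ((-(YB * condMat P B A)).mulVec (condExpVec P A g)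
            + YB.mulVec (condExpVec P B g)) j * G ((B j).indicator (1 : 𝒳 → ℝ)) := by
  intro g
  have h1 : rake2 P A B G (n + 1) g = rake2 P A B G n g
      - ∑ j, condExpVec P A g j * rake2 P A B G n ((A j).indicator (1 : 𝒳 → ℝ)) := by
    simp only [rake2]
    rw [if_pos hn]
    rfl
  rw [h1, H g]
  have h2 : ∀ j : Fin m₁, rake2 P A B G n ((A j).indicator (1 : 𝒳 → ℝ))
      = G ((A j).indicator (1 : 𝒳 → ℝ))
        - ∑ i, (XA.mulVec (Pi.single j 1) + XB.mulVec fun i' => condMat P B A i' j) i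
            * G ((A i).indicator (1 : 𝒳 → ℝ))
        - ∑ i', (YA.mulVec (Pi.single j 1) + YB.mulVec fun i'' => condMat P B A i'' j) i'
            * G ((B i').indicator (1 : 𝒳 → ℝ)) := by
    intro j
    rw [H, condExpVec_indicator_same' P A hAmeas hAdisj hA j,
      condExpVec_indicator_other' P B A hAmeas j]
  simp only [h2, mul_sub]
  rw [Finset.sum_sub_distrib, Finset.sum_sub_distrib,
    helper_substA' (condMat P B A) XA XB (condExpVec P A g) _,
    helper_substA' (condMat P B A) YA YB (condExpVec P A g) _]
  simp only [Matrix.sub_mulVec, Matrix.add_mulVec, Matrix.neg_mulVec, Matrix.one_mulVec,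
    Pi.add_apply, Pi.sub_apply, Pi.neg_apply, add_mul, sub_mul, neg_mul,
    Finset.sum_add_distrib, Finset.sum_sub_distrib, Finset.sum_neg_distrib]
  ring


lemma rake2_stepB (P : Measure 𝒳) [IsProbabilityMeasure P] {m₁ m₂ : ℕ}
    (A : Fin m₁ → Set 𝒳) (B : Fin m₂ → Set 𝒳)
    (hBmeas : ∀ j, MeasurableSet (B j))
    (hBdisj : ∀ i j, i ≠ j → Disjoint (B i) (B j))
    (hB : ∀ j, 0 < P (B j))
    (G : (𝒳 → ℝ) → ℝ) (n : ℕ) (hn : ¬ (n + 1) % 2 = 1)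
    (XA : Matrix (Fin m₁) (Fin m₁) ℝ) (XB : Matrix (Fin m₁) (Fin m₂) ℝ)
    (YA : Matrix (Fin m₂) (Fin m₁) ℝ) (YB : Matrix (Fin m₂) (Fin m₂) ℝ)
    (H : ∀ g, rake2 P A B G n g = G g
        - ∑ i, (XA.mulVec (condExpVec P A g) + XB.mulVec (condExpVec P B g)) i
            * G ((A i).indicator (1 : 𝒳 → ℝ))
        - ∑ j, (YA.mulVec (condExpVec P A g) + YB.mulVec (condExpVec P B g)) j
            * G ((B j).indicator (1 : 𝒳 → ℝ))) :
    ∀ g, rake2 P A B G (n + 1) g = G g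
        - ∑ i, (XA.mulVec (condExpVec P A g)
            + (-(XA * condMat P A B)).mulVec (condExpVec P B g)) i
              * G ((A i).indicator (1 : 𝒳 → ℝ))
        - ∑ j, (YA.mulVec (condExpVec P A g)
            + ((1 : Matrix (Fin m₂) (Fin m₂) ℝ) - YA * condMat P A B).mulVec
                (condExpVec P B g)) j * G ((B j).indicator (1 : 𝒳 → ℝ)) := by
  intro g
  have h1 : rake2 P A B G (n + 1) g = rake2 P A B G n g
      - ∑ j, condExpVec P B g j * rake2 P A B G n ((B j).indicator (1 : 𝒳 → ℝ)) := by
    simp only [rake2]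
    rw [if_neg hn]
    rfl
  rw [h1, H g]
  have h2 : ∀ j : Fin m₂, rake2 P A B G n ((B j).indicator (1 : 𝒳 → ℝ))
      = G ((B j).indicator (1 : 𝒳 → ℝ))
        - ∑ i, (XA.mulVec (fun i' => condMat P A B i' j) + XB.mulVec (Pi.single j 1)) i
            * G ((A i).indicator (1 : 𝒳 → ℝ))
        - ∑ i', (YA.mulVec (fun i'' => condMat P A B i'' j) + YB.mulVec (Pi.single j 1)) i'
            * G ((B i').indicator (1 : 𝒳 → ℝ)) := by
    intro j
    rw [H, condExpVec_indicator_same' P B hBmeas hBdisj hB j,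
      condExpVec_indicator_other' P A B hBmeas j]
  simp only [h2, mul_sub]
  rw [Finset.sum_sub_distrib, Finset.sum_sub_distrib,
    helper_substB' (condMat P A B) XA XB (condExpVec P B g) _,
    helper_substB' (condMat P A B) YA YB (condExpVec P B g) _]
  simp only [Matrix.sub_mulVec, Matrix.add_mulVec, Matrix.neg_mulVec, Matrix.one_mulVec,
    Pi.add_apply, Pi.sub_apply, Pi.neg_apply, add_mul, sub_mul, neg_mul,
    Finset.sum_add_distrib, Finset.sum_sub_distrib, Finset.sum_neg_distrib]
  ring

def T1sum (P : Measure 𝒳) {m₁ m₂ : ℕ} (A : Fin m₁ → Set 𝒳) (B : Fin m₂ → Set 𝒳)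
    (m : ℕ) : Matrix (Fin m₁) (Fin m₁) ℝ :=
  ∑ k ∈ Finset.range m, (condMat P A B * condMat P B A) ^ k

def T2sum (P : Measure 𝒳) {m₁ m₂ : ℕ} (A : Fin m₁ → Set 𝒳) (B : Fin m₂ → Set 𝒳)
    (m : ℕ) : Matrix (Fin m₂) (Fin m₂) ℝ :=
  ∑ k ∈ Finset.range m, (condMat P B A * condMat P A B) ^ k

lemma T1sum_succ (P : Measure 𝒳) {m₁ m₂ : ℕ} (A : Fin m₁ → Set 𝒳) (B : Fin m₂ → Set 𝒳)
    (m : ℕ) : T1sum P A B (m + 1)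
      = 1 + T1sum P A B m * (condMat P A B * condMat P B A) := by
  rw [T1sum, Finset.sum_range_succ', pow_zero, add_comm]
  congr 1
  rw [T1sum, Finset.sum_mul]
  exact Finset.sum_congr rfl fun k _ => pow_succ _ k

lemma T2sum_succ (P : Measure 𝒳) {m₁ m₂ : ℕ} (A : Fin m₁ → Set 𝒳) (B : Fin m₂ → Set 𝒳)
    (m : ℕ) : T2sum P A B (m + 1)
      = 1 + T2sum P A B m * (condMat P B A * condMat P A B) := by
  rw [T2sum, Finset.sum_range_succ', pow_zero, add_comm]
  congr 1
  rw [T2sum, Finset.sum_mul]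
  exact Finset.sum_congr rfl fun k _ => pow_succ _ k

lemma rake2_invariant (P : Measure 𝒳) [IsProbabilityMeasure P] {m₁ m₂ : ℕ}
    (A : Fin m₁ → Set 𝒳) (B : Fin m₂ → Set 𝒳)
    (hAmeas : ∀ i, MeasurableSet (A i)) (hBmeas : ∀ j, MeasurableSet (B j))
    (hAdisj : ∀ i j, i ≠ j → Disjoint (A i) (A j))
    (hBdisj : ∀ i j, i ≠ j → Disjoint (B i) (B j))
    (hA : ∀ i, 0 < P (A i)) (hB : ∀ j, 0 < P (B j))
    (G : (𝒳 → ℝ) → ℝ) : ∀ m : ℕ,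
    (∀ g, rake2 P A B G (2 * m) g = G g
      - ∑ i, ((T1sum P A B m).mulVec (condExpVec P A g)
          + (-(T1sum P A B m * condMat P A B)).mulVec (condExpVec P B g)) i
            * G ((A i).indicator (1 : 𝒳 → ℝ))
      - ∑ j, ((-(T2sum P A B (m - 1) * condMat P B A)).mulVec (condExpVec P A g)
          + (T2sum P A B m).mulVec (condExpVec P B g)) j
            * G ((B j).indicator (1 : 𝒳 → ℝ)))
    ∧ (∀ g, rake2 P A B G (2 * m + 1) g = G g
      - ∑ i, ((T1sum P A B (m + 1)).mulVec (condExpVec P A g)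
          + (-(T1sum P A B m * condMat P A B)).mulVec (condExpVec P B g)) i
            * G ((A i).indicator (1 : 𝒳 → ℝ))
      - ∑ j, ((-(T2sum P A B m * condMat P B A)).mulVec (condExpVec P A g)
          + (T2sum P A B m).mulVec (condExpVec P B g)) j
            * G ((B j).indicator (1 : 𝒳 → ℝ))) := by
  have even_to_odd : ∀ m : ℕ,
      (∀ g, rake2 P A B G (2 * m) g = G g
        - ∑ i, ((T1sum P A B m).mulVec (condExpVec P A g)
            + (-(T1sum P A B m * condMat P A B)).mulVec (condExpVec P B g)) i
              * G ((A i).indicator (1 : 𝒳 → ℝ))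
        - ∑ j, ((-(T2sum P A B (m - 1) * condMat P B A)).mulVec (condExpVec P A g)
            + (T2sum P A B m).mulVec (condExpVec P B g)) j
              * G ((B j).indicator (1 : 𝒳 → ℝ))) →
      (∀ g, rake2 P A B G (2 * m + 1) g = G g
        - ∑ i, ((T1sum P A B (m + 1)).mulVec (condExpVec P A g)
            + (-(T1sum P A B m * condMat P A B)).mulVec (condExpVec P B g)) i
              * G ((A i).indicator (1 : 𝒳 → ℝ))
        - ∑ j, ((-(T2sum P A B m * condMat P B A)).mulVec (condExpVec P A g)
            + (T2sum P A B m).mulVec (condExpVec P B g)) j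
              * G ((B j).indicator (1 : 𝒳 → ℝ))) := by
    intro m Heven
    have h := rake2_stepA P A B hAmeas hAdisj hA G (2 * m) (by omega) _ _ _ _ Heven
    have e1 : (1 : Matrix (Fin m₁) (Fin m₁) ℝ)
        - -(T1sum P A B m * condMat P A B) * condMat P B A = T1sum P A B (m + 1) := by
      rw [T1sum_succ, Matrix.neg_mul, sub_neg_eq_add, Matrix.mul_assoc]
    rw [e1] at h
    exact h
  have odd_to_even : ∀ m : ℕ,
      (∀ g, rake2 P A B G (2 * m + 1) g = G g
        - ∑ i, ((T1sum P A B (m + 1)).mulVec (condExpVec P A g)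
            + (-(T1sum P A B m * condMat P A B)).mulVec (condExpVec P B g)) i
              * G ((A i).indicator (1 : 𝒳 → ℝ))
        - ∑ j, ((-(T2sum P A B m * condMat P B A)).mulVec (condExpVec P A g)
            + (T2sum P A B m).mulVec (condExpVec P B g)) j
              * G ((B j).indicator (1 : 𝒳 → ℝ))) →
      (∀ g, rake2 P A B G (2 * (m + 1)) g = G g
        - ∑ i, ((T1sum P A B (m + 1)).mulVec (condExpVec P A g)
            + (-(T1sum P A B (m + 1) * condMat P A B)).mulVec (condExpVec P B g)) i
              * G ((A i).indicator (1 : 𝒳 → ℝ))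
        - ∑ j, ((-(T2sum P A B ((m + 1) - 1) * condMat P B A)).mulVec (condExpVec P A g)
            + (T2sum P A B (m + 1)).mulVec (condExpVec P B g)) j
              * G ((B j).indicator (1 : 𝒳 → ℝ))) := by
    intro m Hodd
    have h := rake2_stepB P A B hBmeas hBdisj hB G (2 * m + 1) (by omega) _ _ _ _ Hodd
    have e2 : (1 : Matrix (Fin m₂) (Fin m₂) ℝ)
        - -(T2sum P A B m * condMat P B A) * condMat P A B = T2sum P A B (m + 1) := by
      rw [T2sum_succ, Matrix.neg_mul, sub_neg_eq_add, Matrix.mul_assoc]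
    rw [e2] at h
    have hidx : 2 * (m + 1) = 2 * m + 1 + 1 := by ring
    rw [hidx]
    simpa using h
  intro m
  induction m with
  | zero =>
      have heven : ∀ g, rake2 P A B G (2 * 0) g = G g
          - ∑ i, ((T1sum P A B 0).mulVec (condExpVec P A g)
              + (-(T1sum P A B 0 * condMat P A B)).mulVec (condExpVec P B g)) i
                * G ((A i).indicator (1 : 𝒳 → ℝ))
          - ∑ j, ((-(T2sum P A B (0 - 1) * condMat P B A)).mulVec (condExpVec P A g)
              + (T2sum P A B 0).mulVec (condExpVec P B g)) j
                * G ((B j).indicator (1 : 𝒳 → ℝ)) := by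
        intro g
        show rake2 P A B G 0 g = _
        rw [rake2]
        simp [T1sum, T2sum, Matrix.zero_mulVec]
      exact ⟨heven, even_to_odd 0 heven⟩
  | succ m ih =>
      have heven := odd_to_even m ih.2
      exact ⟨heven, even_to_odd (m + 1) heven⟩

/-- Two-margin closed form, even case: for all `m ≥ 0`,
`G^{(2m)}(f) = G(f) − (S_{1,even}^{(m−1)}(f))ᵗ·G[A] − (S_{2,even}^{(m−2)}(f))ᵗ·G[B]`. -/
theorem rake2_even_closed_form
    (P : Measure 𝒳) [IsProbabilityMeasure P]
    {m₁ m₂ : ℕ} (A : Fin m₁ → Set 𝒳) (B : Fin m₂ → Set 𝒳)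
    (hAmeas : ∀ i, MeasurableSet (A i)) (hBmeas : ∀ j, MeasurableSet (B j))
    (hAdisj : ∀ i j, i ≠ j → Disjoint (A i) (A j))
    (hBdisj : ∀ i j, i ≠ j → Disjoint (B i) (B j))
    (hAcov : (⋃ i, A i) = Set.univ) (hBcov : (⋃ j, B j) = Set.univ)
    (hA : ∀ i, 0 < P (A i)) (hB : ∀ j, 0 < P (B j))
    (G : (𝒳 → ℝ) → ℝ)
    (hGadd : ∀ f g : 𝒳 → ℝ, G (f + g) = G f + G g)
    (hGsmul : ∀ (c : ℝ) (f : 𝒳 → ℝ), G (c • f) = c * G f)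
    (f : 𝒳 → ℝ) (hmf : Measurable f) (M : ℝ) (hbd : ∀ x, |f x| ≤ M)
    (m : ℕ) :
    rake2 P A B G (2 * m) f
      = G f
        - ∑ i : Fin m₁, S1even P A B f ((m : ℤ) - 1) i * G ((A i).indicator (1 : 𝒳 → ℝ))
        - ∑ j : Fin m₂, S2even P A B f ((m : ℤ) - 2) j * G ((B j).indicator (1 : 𝒳 → ℝ)) := by
  have hS1 : S1even P A B f ((m : ℤ) - 1)
      = (T1sum P A B m).mulVec (condExpVec P A f)
        - (T1sum P A B m * condMat P A B).mulVec (condExpVec P B f) := by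
    rw [S1even, show ((m : ℤ) - 1 + 1).toNat = m by omega]
    calc ∑ k ∈ Finset.range m, ((condMat P A B * condMat P B A) ^ k).mulVec
          (condExpVec P A f - (condMat P A B).mulVec (condExpVec P B f))
        = ∑ k ∈ Finset.range m, (((condMat P A B * condMat P B A) ^ k).mulVec (condExpVec P A f)
            - ((condMat P A B * condMat P B A) ^ k * condMat P A B).mulVec (condExpVec P B f)) := by
          simp only [Matrix.mulVec_sub, Matrix.mulVec_mulVec]
      _ = _ := by
          rw [Finset.sum_sub_distrib, ← sum_mulVec', ← sum_mulVec', T1sum, Matrix.sum_mul]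
  have hS2 : S2even P A B f ((m : ℤ) - 2)
      = (T2sum P A B m).mulVec (condExpVec P B f)
        - (T2sum P A B (m - 1) * condMat P B A).mulVec (condExpVec P A f) := by
    have hodd : S2odd P A B f ((m : ℤ) - 2)
        = (T2sum P A B (m - 1)).mulVec (condExpVec P B f)
          - (T2sum P A B (m - 1) * condMat P B A).mulVec (condExpVec P A f) := by
      rw [S2odd, show ((m : ℤ) - 2 + 1).toNat = m - 1 by omega]
      calc ∑ k ∈ Finset.range (m - 1), ((condMat P B A * condMat P A B) ^ k).mulVec
            (condExpVec P B f - (condMat P B A).mulVec (condExpVec P A f))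
          = ∑ k ∈ Finset.range (m - 1),
              (((condMat P B A * condMat P A B) ^ k).mulVec (condExpVec P B f)
              - ((condMat P B A * condMat P A B) ^ k * condMat P B A).mulVec
                  (condExpVec P A f)) := by
            simp only [Matrix.mulVec_sub, Matrix.mulVec_mulVec]
        _ = _ := by
            rw [Finset.sum_sub_distrib, ← sum_mulVec', ← sum_mulVec', T2sum, Matrix.sum_mul]
    rw [S2even, hodd]
    rcases Nat.eq_zero_or_pos m with hm | hm
    · subst hm
      norm_num [mpowz]
    · obtain ⟨n, rfl⟩ := Nat.exists_eq_succ_of_ne_zero hm.ne'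
      have h1 : (((n + 1 : ℕ) : ℤ) - 2 + 1) = (n : ℤ) := by push_cast; ring
      have h2 : mpowz (condMat P B A * condMat P A B) (((n + 1 : ℕ) : ℤ) - 2 + 1)
          = (condMat P B A * condMat P A B) ^ n := by
        rw [h1, mpowz, if_neg (by omega)]
        norm_num
      rw [h2, show n + 1 - 1 = n from rfl]
      have h3 : T2sum P A B (n + 1) = T2sum P A B n + (condMat P B A * condMat P A B) ^ n := by
        rw [T2sum, T2sum, Finset.sum_range_succ]
      rw [h3, Matrix.add_mulVec]
      abel
  have Hinv := (rake2_invariant P A B hAmeas hBmeas hAdisj hBdisj hA hB G m).1 f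
  rw [Hinv]
  have v1 : (T1sum P A B m).mulVec (condExpVec P A f)
      + (-(T1sum P A B m * condMat P A B)).mulVec (condExpVec P B f)
      = S1even P A B f ((m : ℤ) - 1) := by
    rw [Matrix.neg_mulVec, ← sub_eq_add_neg, hS1]
  have v2 : (-(T2sum P A B (m - 1) * condMat P B A)).mulVec (condExpVec P A f)
      + (T2sum P A B m).mulVec (condExpVec P B f)
      = S2even P A B f ((m : ℤ) - 2) := by
    rw [Matrix.neg_mulVec, neg_add_eq_sub, hS2]
  rw [v1, v2]


end
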